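/- Let G be a directed graph with inconsistent edges E^i, let ~ be the equivalence relation on E^i defined by R ~ S iff u_R and u_S lie in the same strongly connected component of G, and let 𝔼 be the quotient set. For C₁, C₂ ∈ 𝔼, define C₁ ≤⊕ C₂ if there exists S ∈ C₂ with u_S ∈ C₁^⊕, where C^⊕ = ⋂_{R ∈ C} u_R^⊕ and u^⊕ denotes consistent-edge reachability. Then ≤⊕ is antisymmetric and transitive on 𝔼. -/

import Mathlib

namespace CQA

variable {V : Type*}

/-- Directed reachability along edges in `A`. -/
def reach (A : Set (V × V)) (u v : V) : Prop :=
  Relation.ReflTransGen (fun x y => (x, y) ∈ A) u v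

/-- `u` and `v` are in the same strongly connected component of the graph with edges `E`. -/
def sameSCC (E : Set (V × V)) (u v : V) : Prop := reach E u v ∧ reach E v u

/-- There is an undirected path in `E` from `a` to `b` all of whose vertices
(including the endpoints) avoid the set `A`. -/
def ureach (E : Set (V × V)) (A : Set V) (a b : V) : Prop :=
  a ∉ A ∧ Relation.ReflTransGen (fun x y => ((x, y) ∈ E ∨ (y, x) ∈ E) ∧ y ∉ A) a b

/-- `u_R^{+,R}`: vertices reachable from the source of `R` in `G − {R}`. -/
def uplus (E : Set (V × V)) (R : V × V) : Set V := {v | reach (E \ {R}) R.1 v}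

/-- `u^⊕`: vertices reachable from `u` using only consistent edges `Ec`. -/
def uoplus (Ec : Set (V × V)) (u : V) : Set V := {v | reach Ec u v}

/-- `C` is a source-equivalence class of inconsistent edges `Ei`. -/
def IsClass (E Ei : Set (V × V)) (C : Set (V × V)) : Prop :=
  ∃ R ∈ Ei, C = {S ∈ Ei | sameSCC E R.1 S.1}

/-- `C^⊕ = ⋂_{R ∈ C} u_R^⊕`. -/
def Coplus (Ec : Set (V × V)) (C : Set (V × V)) : Set V :=
  {v | ∀ R ∈ C, v ∈ uoplus Ec R.1}

/-- `C⁺ = ⋂_{R ∈ C} u_R^{+,R}`. -/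
def Cplus (E : Set (V × V)) (C : Set (V × V)) : Set V :=
  {v | ∀ R ∈ C, v ∈ uplus E R}

/-- `C₁ ≤⊕ C₂` iff some `S ∈ C₂` has `u_S ∈ C₁^⊕`. -/
def leOplus (Ec : Set (V × V)) (C₁ C₂ : Set (V × V)) : Prop :=
  ∃ S ∈ C₂, S.1 ∈ Coplus Ec C₁

/-- The strict order `C₁ <⊕ C₂`. -/
def ltOplus (Ec : Set (V × V)) (C₁ C₂ : Set (V × V)) : Prop :=
  leOplus Ec C₁ C₂ ∧ C₁ ≠ C₂

/-- A sink: a maximal element of `<⊕` among source-equivalence classes. -/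
def IsSink (E Ei Ec : Set (V × V)) (C : Set (V × V)) : Prop :=
  IsClass E Ei C ∧ ∀ C', IsClass E Ei C' → ¬ ltOplus Ec C C'

/-- `C' ∈ coupled⊕(C)`. -/
def coupledOplusCl (E Ec : Set (V × V)) (C C' : Set (V × V)) : Prop :=
  C' = C ∨ ∃ R ∈ C, ∃ S ∈ C', ureach E (Coplus Ec C) R.2 S.1

/-- `C' ∈ coupled⁺(C)`. -/
def coupledPlusCl (E : Set (V × V)) (C C' : Set (V × V)) : Prop :=
  C' = C ∨ ∃ R ∈ C, ∃ S ∈ C', ureach E (Cplus E C) R.2 S.1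

/-- `S ∈ coupled⁺(R)` for inconsistent edges `R, S`:
either `S ∈ [R]`, or there is an undirected path `v_R ↔ u_S` avoiding `u_R^{+,R}`. -/
def coupledPlusEdge (E Ei : Set (V × V)) (R S : V × V) : Prop :=
  S ∈ Ei ∧ (sameSCC E R.1 S.1 ∨ ureach E (uplus E R) R.2 S.1)

/-- `G` is splittable: every coupled pair of inconsistent edges is source-equivalent. -/
def Splittable (E Ec : Set (V × V)) : Prop :=
  ∀ R ∈ E \ Ec, ∀ S ∈ E \ Ec,
    coupledPlusEdge E (E \ Ec) R S → coupledPlusEdge E (E \ Ec) S R → sameSCC E R.1 S.1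

/-- `G` is f-closed: for every inconsistent edge `R`,
`v_R^⊕ ∩ u_R^{+,R} ⊆ u_R^⊕`. -/
def FClosed (E Ec : Set (V × V)) : Prop :=
  ∀ R ∈ E \ Ec, ∀ v, v ∈ uoplus Ec R.2 → v ∈ uplus E R → v ∈ uoplus Ec R.1

end CQA

open CQA in
/-- ≤⊕ is antisymmetric and transitive on source-equivalence classes. -/
theorem stmt_7 {V : Type*} [Fintype V] (E Ec : Set (V × V)) (hEc : Ec ⊆ E) :
    (∀ C₁ C₂, IsClass E (E \ Ec) C₁ → IsClass E (E \ Ec) C₂ →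
      leOplus Ec C₁ C₂ → leOplus Ec C₂ C₁ → C₁ = C₂) ∧
    (∀ C₁ C₂ C₃, IsClass E (E \ Ec) C₁ → IsClass E (E \ Ec) C₂ → IsClass E (E \ Ec) C₃ →
      leOplus Ec C₁ C₂ → leOplus Ec C₂ C₃ → leOplus Ec C₁ C₃) := by
  have hmono : ∀ u v : V, reach Ec u v → reach E u v := fun u v h =>
    Relation.ReflTransGen.mono (fun x y hxy => hEc hxy) u v h
  constructor
  · rintro C₁ C₂ ⟨R₁, hR₁, rfl⟩ ⟨R₂, hR₂, rfl⟩ ⟨S, hS, hSop⟩ ⟨T, hT, hTop⟩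
    -- T ∈ C₁, S ∈ C₂, reach Ec T.1 S.1 and reach Ec S.1 T.1
    have hTS : reach E T.1 S.1 := hmono _ _ (hSop T hT)
    have hST : reach E S.1 T.1 := hmono _ _ (hTop S hS)
    have h1 : sameSCC E R₁.1 T.1 := hT.2
    have h2 : sameSCC E R₂.1 S.1 := hS.2
    have h12 : sameSCC E R₁.1 R₂.1 :=
      ⟨h1.1.trans (hTS.trans h2.2), h2.1.trans (hST.trans h1.2)⟩
    ext X
    simp only [Set.mem_setOf_eq]
    exact ⟨fun ⟨hX, hsc⟩ => ⟨hX, ⟨h12.2.trans hsc.1, hsc.2.trans h12.1⟩⟩,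
      fun ⟨hX, hsc⟩ => ⟨hX, ⟨h12.1.trans hsc.1, hsc.2.trans h12.2⟩⟩⟩
  · rintro C₁ C₂ C₃ _ _ _ ⟨S, hS, hSop⟩ ⟨T, hT, hTop⟩
    exact ⟨T, hT, fun R hR => (hSop R hR).trans (hTop S hS)⟩
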